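/- arXiv:1403.4876 — 7 statements merged into one kernel-verified Lean document; each statement's English description precedes it below -/
import Mathlib

section
/- In a bi-orderable group, if g^n commutes with h for some n > 0, then g commutes with h. -/
def IsLeftInvariant {G : Type*} [Group G] (r : G → G → Prop) : Prop :=
  ∀ f g h : G, r g h → r (f * g) (f * h)

def IsRightInvariant {G : Type*} [Group G] (r : G → G → Prop) : Prop :=
  ∀ f g h : G, r g h → r (g * f) (h * f)

def IsLeftOrderable (G : Type*) [Group G] : Prop :=
  ∃ r : G → G → Prop, IsStrictTotalOrder G r ∧ IsLeftInvariant r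

def IsBiOrderable (G : Type*) [Group G] : Prop :=
  ∃ r : G → G → Prop, IsStrictTotalOrder G r ∧ IsLeftInvariant r ∧ IsRightInvariant r

/-- `P` is the positive cone of a left-ordering: a subsemigroup such that
`G = {1} ⊔ P ⊔ P⁻¹` (disjointly). -/
def IsPositiveCone {G : Type*} [Group G] (P : Set G) : Prop :=
  (∀ a ∈ P, ∀ b ∈ P, a * b ∈ P) ∧
  (∀ g : G, g = 1 ∨ g ∈ P ∨ g⁻¹ ∈ P) ∧
  (1 : G) ∉ P ∧
  (∀ g : G, ¬(g ∈ P ∧ g⁻¹ ∈ P))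

theorem biorderable_commute_of_pow_commute {G : Type*} [Group G]
    (hG : IsBiOrderable G) (g h : G) (n : ℕ) (hn : 0 < n)
    (hc : Commute (g ^ n) h) : Commute g h := by
  obtain ⟨r, hsto, hl, hr⟩ := hG
  have hpow : ∀ a b : G, r a b → ∀ m : ℕ, 0 < m → r (a ^ m) (b ^ m) := by
    intro a b hab m hm
    induction m with
    | zero => exact absurd hm (lt_irrefl 0)
    | succ k ih =>
      rcases Nat.eq_zero_or_pos k with h0 | hk
      · simpa [h0] using hab
      · have h1 : r (a ^ k * a) (b ^ k * a) := hr a _ _ (ih hk)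
        have h2 : r (b ^ k * a) (b ^ k * b) := hl _ a b hab
        have := hsto.trans _ _ _ h1 h2
        simpa [pow_succ] using this
  have key : (h * g * h⁻¹) ^ n = g ^ n := by
    rw [conj_pow, mul_inv_eq_iff_eq_mul]
    exact hc.eq.symm
  rcases (by haveI := hsto; exact trichotomous_of r (h * g * h⁻¹) g) with hlt | heq | hgt
  · exact absurd (key ▸ hpow _ _ hlt n hn) (hsto.irrefl _)
  · rw [mul_inv_eq_iff_eq_mul] at heq
    exact heq.symm
  · exact absurd (key ▸ hpow _ _ hgt n hn) (hsto.irrefl _)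
end

section
/- For any group G, the set LO(G) of positive cones of left-orderings of G is a closed subset of 2^G with the product topology, and hence is compact. -/
lemma eval_closed {G : Type*} (a : G) (b : Bool) :
    IsClosed {χ : G → Bool | χ a = b} :=
  by
  have h : {χ : G → Bool | χ a = b} = (fun χ : G → Bool => χ a) ⁻¹' {b} := rfl
  rw [h]; exact IsClosed.preimage (continuous_apply a) (isClosed_discrete _)

lemma eval_open {G : Type*} (a : G) (b : Bool) :
    IsOpen {χ : G → Bool | χ a = b} :=
  by
  have h : {χ : G → Bool | χ a = b} = (fun χ : G → Bool => χ a) ⁻¹' {b} := rfl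
  rw [h]; exact IsOpen.preimage (continuous_apply a) (isOpen_discrete _)

/-- The space `LO(G)` of positive cones of left-orderings of `G`, viewed inside
`2^G = G → Bool` with the product (Tychonoff) topology, is closed and compact. -/
theorem LO_closed_and_compact (G : Type*) [Group G] :
    IsClosed {χ : G → Bool | (∀ a b : G, χ a = true → χ b = true → χ (a * b) = true) ∧
        (∀ g : G, g = 1 ∨ χ g = true ∨ χ g⁻¹ = true) ∧
        χ 1 = false ∧ (∀ g : G, ¬(χ g = true ∧ χ g⁻¹ = true))} ∧
    IsCompact {χ : G → Bool | (∀ a b : G, χ a = true → χ b = true → χ (a * b) = true) ∧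
        (∀ g : G, g = 1 ∨ χ g = true ∨ χ g⁻¹ = true) ∧
        χ 1 = false ∧ (∀ g : G, ¬(χ g = true ∧ χ g⁻¹ = true))} := by
  have h1 : IsClosed {χ : G → Bool |
      ∀ a b : G, χ a = true → χ b = true → χ (a * b) = true} := by
    have : {χ : G → Bool | ∀ a b : G, χ a = true → χ b = true → χ (a * b) = true} =
        ⋂ a : G, ⋂ b : G,
          ({χ : G → Bool | χ a = true}ᶜ ∪ {χ | χ b = true}ᶜ ∪ {χ | χ (a*b) = true}) := by
      ext χ; simp only [Set.mem_setOf_eq, Set.mem_iInter, Set.mem_union, Set.mem_compl_iff]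
      constructor
      · intro h a b
        by_cases ha : χ a = true
        · by_cases hb : χ b = true
          · exact Or.inr (h a b ha hb)
          · exact Or.inl (Or.inr hb)
        · exact Or.inl (Or.inl ha)
      · intro h a b ha hb; rcases h a b with (h'|h')|h'
        · exact absurd ha h'
        · exact absurd hb h'
        · exact h'
    rw [this]
    exact isClosed_iInter fun a => isClosed_iInter fun b =>
      (((eval_open a true).isClosed_compl.union (eval_open b true).isClosed_compl).union
        (eval_closed (a*b) true))
  have h2 : IsClosed {χ : G → Bool | ∀ g : G, g = 1 ∨ χ g = true ∨ χ g⁻¹ = true} := by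
    have : {χ : G → Bool | ∀ g : G, g = 1 ∨ χ g = true ∨ χ g⁻¹ = true} =
        ⋂ g : G, ({χ : G → Bool | g = 1} ∪ {χ | χ g = true} ∪ {χ | χ g⁻¹ = true}) := by
      ext χ; simp only [Set.mem_setOf_eq, Set.mem_iInter, Set.mem_union]
      constructor
      · intro h g; rcases h g with h'|h'|h'
        · exact Or.inl (Or.inl h')
        · exact Or.inl (Or.inr h')
        · exact Or.inr h'
      · intro h g; rcases h g with (h'|h')|h'
        · exact Or.inl h'
        · exact Or.inr (Or.inl h')
        · exact Or.inr (Or.inr h')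
    rw [this]
    refine isClosed_iInter fun g => ?_
    by_cases hg : g = 1
    · have : {χ : G → Bool | g = 1} ∪ {χ | χ g = true} ∪ {χ | χ g⁻¹ = true} = Set.univ := by
        ext χ; simp [hg]
      rw [this]; exact isClosed_univ
    · have : {χ : G → Bool | g = 1} = (∅ : Set (G → Bool)) := by ext χ; simp [hg]
      rw [this, Set.empty_union]
      exact (eval_closed g true).union (eval_closed g⁻¹ true)
  have h3 : IsClosed {χ : G → Bool | χ 1 = false} := eval_closed 1 false
  have h4 : IsClosed {χ : G → Bool | ∀ g : G, ¬(χ g = true ∧ χ g⁻¹ = true)} := by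
    have : {χ : G → Bool | ∀ g : G, ¬(χ g = true ∧ χ g⁻¹ = true)} =
        ⋂ g : G, ({χ : G → Bool | χ g = true}ᶜ ∪ {χ | χ g⁻¹ = true}ᶜ) := by
      ext χ; simp only [Set.mem_setOf_eq, Set.mem_iInter, Set.mem_union, Set.mem_compl_iff]
      constructor
      · intro h g
        by_cases hg : χ g = true
        · exact Or.inr (fun hg' => h g ⟨hg, hg'⟩)
        · exact Or.inl hg
      · intro h g ⟨h1, h2⟩; rcases h g with h'|h'
        · exact h' h1
        · exact h' h2
    rw [this]
    exact isClosed_iInter fun g =>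
      (eval_open g true).isClosed_compl.union (eval_open g⁻¹ true).isClosed_compl
  have heq : {χ : G → Bool | (∀ a b : G, χ a = true → χ b = true → χ (a * b) = true) ∧
        (∀ g : G, g = 1 ∨ χ g = true ∨ χ g⁻¹ = true) ∧
        χ 1 = false ∧ (∀ g : G, ¬(χ g = true ∧ χ g⁻¹ = true))} =
      {χ : G → Bool | ∀ a b : G, χ a = true → χ b = true → χ (a * b) = true} ∩
      ({χ : G → Bool | ∀ g : G, g = 1 ∨ χ g = true ∨ χ g⁻¹ = true} ∩
      ({χ : G → Bool | χ 1 = false} ∩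
       {χ : G → Bool | ∀ g : G, ¬(χ g = true ∧ χ g⁻¹ = true)})) := by
    ext χ; simp only [Set.mem_setOf_eq, Set.mem_inter_iff, and_assoc]
  have hclosed : IsClosed {χ : G → Bool | (∀ a b : G, χ a = true → χ b = true → χ (a * b) = true) ∧
        (∀ g : G, g = 1 ∨ χ g = true ∨ χ g⁻¹ = true) ∧
        χ 1 = false ∧ (∀ g : G, ¬(χ g = true ∧ χ g⁻¹ = true))} := by
    rw [heq]; exact h1.inter (h2.inter (h3.inter h4))
  exact ⟨hclosed, hclosed.isCompact⟩
end

section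
/- For any group G, the set O(G) of positive cones of bi-orderings is a closed subset of LO(G) in the product topology on 2^G, and hence compact. -/
private lemma closed_aux {G : Type*} (f g h : G → G → G) :
    IsClosed {χ : G → Bool |
      ∀ a b : G, χ (f a b) = true → χ (g a b) = true → χ (h a b) = true} := by
  have : {χ : G → Bool |
        ∀ a b : G, χ (f a b) = true → χ (g a b) = true → χ (h a b) = true}
      = ⋂ a : G, ⋂ b : G, (fun χ : G → Bool => (χ (f a b), χ (g a b), χ (h a b))) ⁻¹'
          {p : Bool × Bool × Bool | p.1 = true → p.2.1 = true → p.2.2 = true} := by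
    ext χ; simp [Set.mem_iInter]
  rw [this]
  exact isClosed_iInter fun a => isClosed_iInter fun b =>
    IsClosed.preimage
      ((continuous_apply (f a b)).prodMk
        ((continuous_apply (g a b)).prodMk (continuous_apply (h a b))))
      (isClosed_discrete _)

/-- The space `O(G)` of positive cones of bi-orderings of `G`, viewed inside
`2^G = G → Bool` with the product (Tychonoff) topology, is closed (hence closed in
the subspace `LO(G)`, in which it sits) and compact. -/
theorem O_closed_and_compact (G : Type*) [Group G] :
    ({χ : G → Bool | (∀ a b : G, χ a = true → χ b = true → χ (a * b) = true) ∧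
        (∀ g : G, g = 1 ∨ χ g = true ∨ χ g⁻¹ = true) ∧
        χ 1 = false ∧ (∀ g : G, ¬(χ g = true ∧ χ g⁻¹ = true)) ∧
        (∀ g a : G, χ a = true → χ (g⁻¹ * a * g) = true)} ⊆
      {χ : G → Bool | (∀ a b : G, χ a = true → χ b = true → χ (a * b) = true) ∧
        (∀ g : G, g = 1 ∨ χ g = true ∨ χ g⁻¹ = true) ∧
        χ 1 = false ∧ (∀ g : G, ¬(χ g = true ∧ χ g⁻¹ = true))}) ∧
    IsClosed {χ : G → Bool | (∀ a b : G, χ a = true → χ b = true → χ (a * b) = true) ∧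
        (∀ g : G, g = 1 ∨ χ g = true ∨ χ g⁻¹ = true) ∧
        χ 1 = false ∧ (∀ g : G, ¬(χ g = true ∧ χ g⁻¹ = true)) ∧
        (∀ g a : G, χ a = true → χ (g⁻¹ * a * g) = true)} ∧
    IsCompact {χ : G → Bool | (∀ a b : G, χ a = true → χ b = true → χ (a * b) = true) ∧
        (∀ g : G, g = 1 ∨ χ g = true ∨ χ g⁻¹ = true) ∧
        χ 1 = false ∧ (∀ g : G, ¬(χ g = true ∧ χ g⁻¹ = true)) ∧
        (∀ g a : G, χ a = true → χ (g⁻¹ * a * g) = true)} := by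
  have hclosed : IsClosed {χ : G → Bool |
      (∀ a b : G, χ a = true → χ b = true → χ (a * b) = true) ∧
      (∀ g : G, g = 1 ∨ χ g = true ∨ χ g⁻¹ = true) ∧
      χ 1 = false ∧ (∀ g : G, ¬(χ g = true ∧ χ g⁻¹ = true)) ∧
      (∀ g a : G, χ a = true → χ (g⁻¹ * a * g) = true)} := by
    have h1 : IsClosed {χ : G → Bool |
        ∀ a b : G, χ a = true → χ b = true → χ (a * b) = true} :=
      closed_aux (fun a _ => a) (fun _ b => b) (fun a b => a * b)
    have h2 : IsClosed {χ : G → Bool | ∀ g : G, g = 1 ∨ χ g = true ∨ χ g⁻¹ = true} := by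
      have e : {χ : G → Bool | ∀ g : G, g = 1 ∨ χ g = true ∨ χ g⁻¹ = true}
          = ⋂ g : G, {χ : G → Bool | g = 1 ∨ χ g = true ∨ χ g⁻¹ = true} := by
        ext χ; simp [Set.mem_iInter]
      rw [e]
      refine isClosed_iInter fun g => ?_
      by_cases hg : g = 1
      · have : {χ : G → Bool | g = 1 ∨ χ g = true ∨ χ g⁻¹ = true} = Set.univ := by
          ext χ; simp [hg]
        rw [this]; exact isClosed_univ
      · have : {χ : G → Bool | g = 1 ∨ χ g = true ∨ χ g⁻¹ = true}
            = (fun χ : G → Bool => (χ g, χ g⁻¹)) ⁻¹'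
              {p : Bool × Bool | p.1 = true ∨ p.2 = true} := by
          ext χ; simp [hg]
        rw [this]
        exact IsClosed.preimage
          ((continuous_apply g).prodMk (continuous_apply g⁻¹))
          (isClosed_discrete _)
    have h3 : IsClosed {χ : G → Bool | χ 1 = false} := by
      have e : {χ : G → Bool | χ 1 = false}
          = (fun χ : G → Bool => χ 1) ⁻¹' {b : Bool | b = false} := rfl
      rw [e]
      exact IsClosed.preimage (continuous_apply (1 : G)) (isClosed_discrete _)
    have h4 : IsClosed {χ : G → Bool | ∀ g : G, ¬(χ g = true ∧ χ g⁻¹ = true)} := by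
      have e : {χ : G → Bool | ∀ g : G, ¬(χ g = true ∧ χ g⁻¹ = true)}
          = ⋂ g : G, {χ : G → Bool | ¬(χ g = true ∧ χ g⁻¹ = true)} := by
        ext χ; simp [Set.mem_iInter]
      rw [e]
      refine isClosed_iInter fun g => ?_
      have : {χ : G → Bool | ¬(χ g = true ∧ χ g⁻¹ = true)}
          = (fun χ : G → Bool => (χ g, χ g⁻¹)) ⁻¹'
            {p : Bool × Bool | ¬(p.1 = true ∧ p.2 = true)} := by
        ext χ; simp
      rw [this]
      exact IsClosed.preimage
        ((continuous_apply g).prodMk (continuous_apply g⁻¹))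
        (isClosed_discrete _)
    have h5 : IsClosed {χ : G → Bool | ∀ g a : G, χ a = true → χ (g⁻¹ * a * g) = true} := by
      have e : {χ : G → Bool | ∀ g a : G, χ a = true → χ (g⁻¹ * a * g) = true}
          = {χ : G → Bool |
              ∀ g a : G, χ a = true → χ a = true → χ (g⁻¹ * a * g) = true} := by
        ext χ; simp only [Set.mem_setOf_eq]
        exact ⟨fun h g a ha _ => h g a ha, fun h g a ha => h g a ha ha⟩
      rw [e]
      exact closed_aux (fun _ a => a) (fun _ a => a) (fun g a => g⁻¹ * a * g)
    have hset : {χ : G → Bool |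
        (∀ a b : G, χ a = true → χ b = true → χ (a * b) = true) ∧
        (∀ g : G, g = 1 ∨ χ g = true ∨ χ g⁻¹ = true) ∧
        χ 1 = false ∧ (∀ g : G, ¬(χ g = true ∧ χ g⁻¹ = true)) ∧
        (∀ g a : G, χ a = true → χ (g⁻¹ * a * g) = true)}
        = {χ : G → Bool | ∀ a b : G, χ a = true → χ b = true → χ (a * b) = true}
          ∩ ({χ : G → Bool | ∀ g : G, g = 1 ∨ χ g = true ∨ χ g⁻¹ = true}
          ∩ ({χ : G → Bool | χ 1 = false}
          ∩ ({χ : G → Bool | ∀ g : G, ¬(χ g = true ∧ χ g⁻¹ = true)}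
          ∩ {χ : G → Bool | ∀ g a : G, χ a = true → χ (g⁻¹ * a * g) = true}))) := by
      ext χ; simp [Set.mem_setOf_eq, and_assoc]
    rw [hset]
    exact h1.inter (h2.inter (h3.inter (h4.inter h5)))
  refine ⟨fun χ hχ => ⟨hχ.1, hχ.2.1, hχ.2.2.1, hχ.2.2.2.1⟩, hclosed, hclosed.isCompact⟩
end

section
/- Let G be a group generated by a finite set X, and for each k let B_k(G) be the set of elements expressible as products of at most k generators and their inverses. If for every k ≥ 1 there exists a subset Q ⊆ B_k(G) with (Q·Q) ∩ B_k(G) ⊆ Q and B_k(G) = {1} ⊔ Q ⊔ Q⁻¹, then G is left-orderable. -/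
/-- The `k`-ball of `G` with respect to a finite generating set `X`: all elements
expressible as products of at most `k` generators and their inverses. -/
def ball {G : Type*} [Group G] (X : Finset G) (k : ℕ) : Set G :=
  {g : G | ∃ l : List G, l.length ≤ k ∧ (∀ x ∈ l, x ∈ X ∨ x⁻¹ ∈ X) ∧ l.prod = g}

lemma ball_mono' {G : Type*} [Group G] (X : Finset G) {j k : ℕ} (hjk : j ≤ k) :
    ball X j ⊆ ball X k := by
  rintro g ⟨l, hl, hx, hp⟩
  exact ⟨l, hl.trans hjk, hx, hp⟩

lemma exists_mem_ball {G : Type*} [Group G] (X : Finset G)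
    (hX : Subgroup.closure (X : Set G) = ⊤) (g : G) : ∃ n, g ∈ ball X n := by
  have hg : g ∈ Subgroup.closure (X : Set G) := by rw [hX]; trivial
  induction hg using Subgroup.closure_induction with
  | mem x hx => exact ⟨1, [x], by simp, by intro y hy; simp at hy; subst hy; exact Or.inl hx, by simp⟩
  | one => exact ⟨0, [], by simp, by simp, by simp⟩
  | mul a b _ _ ha hb =>
      obtain ⟨n, l, hl, hx, hp⟩ := ha
      obtain ⟨m, l', hl', hx', hp'⟩ := hb
      exact ⟨n + m, l ++ l', by simpa using Nat.add_le_add hl hl', by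
        intro x hx''; rcases List.mem_append.1 hx'' with h1 | h1
        · exact hx x h1
        · exact hx' x h1, by simp [hp, hp']⟩
  | inv a _ ha =>
      obtain ⟨n, l, hl, hx, hp⟩ := ha
      refine ⟨n, (l.map (·⁻¹)).reverse, by simpa using hl, ?_, ?_⟩
      · intro x hxm
        simp only [List.mem_reverse, List.mem_map] at hxm
        obtain ⟨y, hy, rfl⟩ := hxm
        rcases hx y hy with h1 | h1
        · exact Or.inr (by simpa using h1)
        · exact Or.inl h1
      · rw [← List.prod_inv_reverse, hp]

theorem leftOrderable_of_preorders {G : Type*} [Group G] (X : Finset G)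
    (hX : Subgroup.closure (X : Set G) = ⊤)
    (h : ∀ k : ℕ, 1 ≤ k → ∃ Q : Set G, Q ⊆ ball X k ∧
      (∀ a ∈ Q, ∀ b ∈ Q, a * b ∈ ball X k → a * b ∈ Q) ∧
      (∀ g ∈ ball X k, g = 1 ∨ g ∈ Q ∨ g⁻¹ ∈ Q) ∧
      (1 : G) ∉ Q ∧ (∀ g : G, ¬(g ∈ Q ∧ g⁻¹ ∈ Q))) :
    IsLeftOrderable G := by
  choose Q hQsub hQmul hQtri hQone hQasym using fun k => h (k + 1) (Nat.le_add_left 1 k)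
  obtain ⟨U, hU⟩ := Filter.exists_ultrafilter_le (Filter.atTop (α := ℕ))
  set P : Set G := {g | ∀ᶠ k in (U : Filter ℕ), g ∈ Q k} with hP
  -- P is closed under multiplication
  have hmul : ∀ a ∈ P, ∀ b ∈ P, a * b ∈ P := by
    intro a ha b hb
    obtain ⟨n, hn⟩ := exists_mem_ball X hX (a * b)
    have hball : ∀ᶠ k in (U : Filter ℕ), a * b ∈ ball X (k + 1) := by
      apply hU
      filter_upwards [Filter.eventually_ge_atTop n] with k hk
      exact ball_mono' X (hk.trans (Nat.le_succ k)) hn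
    filter_upwards [ha, hb, hball] with k ha' hb' hball'
    exact hQmul k a ha' b hb' hball'
  -- trichotomy
  have htri : ∀ g : G, g = 1 ∨ g ∈ P ∨ g⁻¹ ∈ P := by
    intro g
    by_cases hg1 : g = 1
    · exact Or.inl hg1
    obtain ⟨n, hn⟩ := exists_mem_ball X hX g
    have hsub : {k : ℕ | n ≤ k} ⊆ {k | g ∈ Q k} ∪ {k | g⁻¹ ∈ Q k} := by
      intro k hk
      rcases hQtri k g (ball_mono' X (hk.trans (Nat.le_succ k)) hn) with h1 | h1 | h1
      · exact absurd h1 hg1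
      · exact Or.inl h1
      · exact Or.inr h1
    have hmem : {k | g ∈ Q k} ∪ {k | g⁻¹ ∈ Q k} ∈ U :=
      Filter.mem_of_superset (hU (Filter.eventually_ge_atTop n)) hsub
    rcases (Ultrafilter.union_mem_iff).1 hmem with h1 | h1
    · exact Or.inr (Or.inl h1)
    · exact Or.inr (Or.inr h1)
  have hone : (1 : G) ∉ P := by
    intro h1
    obtain ⟨k, hk⟩ := h1.exists
    exact hQone k hk
  have hasym : ∀ g : G, ¬(g ∈ P ∧ g⁻¹ ∈ P) := by
    rintro g ⟨h1, h2⟩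
    obtain ⟨k, hk1, hk2⟩ := (h1.and h2).exists
    exact hQasym k g ⟨hk1, hk2⟩
  refine ⟨fun g h' => g⁻¹ * h' ∈ P, { irrefl := ?_, trans := ?_, trichotomous := ?_ }, ?_⟩
  · intro a b
    rcases htri (a⁻¹ * b) with h1 | h1 | h1
    · exact fun _ _ => inv_mul_eq_one.1 h1
    · exact fun h2 _ => (h2 h1).elim
    · exact fun _ h2 => (h2 (by simpa [mul_inv_rev] using h1)).elim
  · intro a h1
    simp only [inv_mul_cancel] at h1
    exact hone h1
  · intro a b c h1 h2
    have := hmul _ h1 _ h2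
    simpa [mul_assoc] using this
  · intro f g h' h1
    simpa [mul_assoc] using h1
end

section
/- A group G is left-orderable if and only if every finitely generated subgroup of G is left-orderable. -/
theorem isLeftOrderable_iff_cone {G : Type*} [Group G] :
    IsLeftOrderable G ↔ ∃ P : Set G, IsPositiveCone P := by
  constructor
  · rintro ⟨r, hsto, hl⟩
    refine ⟨{g | r 1 g}, ?_, ?_, ?_, ?_⟩
    · intro a ha b hb
      have h1 : r a (a * b) := by simpa using hl a 1 b hb
      exact hsto.trans _ _ _ ha h1
    · intro g
      rcases (by have := hsto.trichotomous 1 g; tauto : r 1 g ∨ 1 = g ∨ r g 1) with h | h | h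
      · exact Or.inr (Or.inl h)
      · exact Or.inl h.symm
      · refine Or.inr (Or.inr ?_)
        simpa using hl g⁻¹ g 1 h
    · exact hsto.irrefl 1
    · rintro g ⟨h1, h2⟩
      have : r g 1 := by simpa using hl g 1 g⁻¹ h2
      exact hsto.irrefl 1 (hsto.trans _ _ _ h1 this)
  · rintro ⟨P, hmul, htot, hone, hasym⟩
    refine ⟨fun g h => g⁻¹ * h ∈ P, ?_, ?_⟩
    · refine { trichotomous := ?_, irrefl := ?_, trans := ?_ }
      · intro a b
        rcases htot (a⁻¹ * b) with h | h | h
        · exact fun _ _ => inv_mul_eq_one.mp h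
        · exact fun h1 _ => absurd h h1
        · intro _ h2
          exact absurd (by simpa [mul_inv_rev] using h) h2
      · intro a
        simp [hone]
      · intro a b c hab hbc
        have := hmul _ hab _ hbc
        simpa [mul_assoc] using this
    · intro f g h hgh
      simpa [mul_assoc] using hgh
theorem leftOrderable_iff_fg_subgroups {G : Type*} [Group G] :
    IsLeftOrderable G ↔ ∀ H : Subgroup G, H.FG → IsLeftOrderable H := by
  constructor
  · rintro ⟨r, hsto, hl⟩ H _
    refine ⟨fun x y => r ↑x ↑y, ?_, ?_⟩
    · refine { trichotomous := ?_, irrefl := ?_, trans := ?_ }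
      · intro a b
        intro h1 h2
        exact Subtype.ext (hsto.trichotomous (a : G) (b : G) h1 h2)
      · intro a
        exact hsto.irrefl (a : G)
      · intro a b c hab hbc
        exact hsto.trans _ _ _ hab hbc
    · intro f g h hgh
      simpa using hl (f : G) g h hgh
  · intro hfg
    rw [isLeftOrderable_iff_cone]
    classical
    -- work in the compact space `G → Bool`
    let A : Set (G → Bool) :=
      {χ | (∀ a b, χ a = true → χ b = true → χ (a * b) = true) ∧
        χ 1 = false ∧ ∀ g, ¬(χ g = true ∧ χ g⁻¹ = true)}
    let C : Finset G → Set (G → Bool) := fun S =>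
      A ∩ ⋂ g ∈ S, {χ | g = 1 ∨ χ g = true ∨ χ g⁻¹ = true}
    have closed3 : ∀ (a b c : G) (p : Bool → Bool → Bool → Prop),
        IsClosed {χ : G → Bool | p (χ a) (χ b) (χ c)} := by
      intro a b c p
      have : {χ : G → Bool | p (χ a) (χ b) (χ c)} =
          (fun χ : G → Bool => (χ a, χ b, χ c)) ⁻¹' {x | p x.1 x.2.1 x.2.2} := rfl
      rw [this]
      exact (isClosed_discrete _).preimage
        ((continuous_apply a).prodMk ((continuous_apply b).prodMk (continuous_apply c)))
    have hAclosed : IsClosed A := by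
      have : A = (⋂ q : G × G, {χ : G → Bool |
            χ q.1 = true → χ q.2 = true → χ (q.1 * q.2) = true}) ∩
          ({χ : G → Bool | χ 1 = false} ∩
           ⋂ g : G, {χ : G → Bool | ¬(χ g = true ∧ χ g⁻¹ = true)}) := by
        ext χ
        simp only [A, Set.mem_setOf_eq, Set.mem_inter_iff, Set.mem_iInter, Prod.forall]
      rw [this]
      refine (isClosed_iInter fun q => ?_).inter
        (IsClosed.inter ?_ (isClosed_iInter fun g => ?_))
      · exact closed3 q.1 q.2 (q.1 * q.2) (fun x y z => x = true → y = true → z = true)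
      · exact closed3 1 1 1 (fun x _ _ => x = false)
      · exact closed3 g g⁻¹ g (fun x y _ => ¬(x = true ∧ y = true))
    have hCclosed : ∀ S, IsClosed (C S) := by
      intro S
      refine hAclosed.inter (isClosed_biInter fun g _ => ?_)
      exact closed3 g g⁻¹ g (fun x y _ => g = 1 ∨ x = true ∨ y = true)
    have hCne : ∀ S, (C S).Nonempty := by
      intro S
      set H : Subgroup G := Subgroup.closure (S : Set G) with hH
      have hHfg : H.FG := ⟨S, rfl⟩
      obtain ⟨P, hmul, htot, hone, hasym⟩ :=
        isLeftOrderable_iff_cone.mp (hfg H hHfg)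
      refine ⟨fun g => decide (∃ h : g ∈ H, (⟨g, h⟩ : H) ∈ P), ?_, ?_⟩
      · refine ⟨?_, ?_, ?_⟩
        · intro a b ha hb
          rw [decide_eq_true_iff] at ha hb ⊢
          obtain ⟨haH, haP⟩ := ha
          obtain ⟨hbH, hbP⟩ := hb
          exact ⟨mul_mem haH hbH, hmul _ haP _ hbP⟩
        · rw [decide_eq_false_iff_not]
          rintro ⟨h1, hP⟩
          exact hone hP
        · intro g
          simp only [decide_eq_true_iff]
          rintro ⟨⟨hgH, hgP⟩, ⟨hgiH, hgiP⟩⟩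
          exact hasym ⟨g, hgH⟩ ⟨hgP, hgiP⟩
      · simp only [Set.mem_iInter, Set.mem_setOf_eq]
        intro g hgS
        have hgH : g ∈ H := Subgroup.subset_closure hgS
        rcases htot ⟨g, hgH⟩ with h | h | h
        · exact Or.inl (congrArg Subtype.val h)
        · exact Or.inr (Or.inl (by rw [decide_eq_true_iff]; exact ⟨hgH, h⟩))
        · refine Or.inr (Or.inr (by rw [decide_eq_true_iff]; exact ⟨inv_mem hgH, h⟩))
    have mono : ∀ {S T : Finset G}, S ⊆ T → C T ⊆ C S := by
      intro S T hST
      exact Set.inter_subset_inter le_rfl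
        (Set.iInter₂_mono' fun g hg => ⟨g, hST hg, le_rfl⟩)
    have hdir : Directed (· ⊇ ·) C := fun S T =>
      ⟨S ∪ T, mono Finset.subset_union_left, mono Finset.subset_union_right⟩
    obtain ⟨χ, hχ⟩ := IsCompact.nonempty_iInter_of_directed_nonempty_isCompact_isClosed
      C hdir hCne (fun S => (hCclosed S).isCompact) hCclosed
    have hA : χ ∈ A := (Set.mem_iInter.mp hχ ∅).1
    refine ⟨{g | χ g = true}, fun a ha b hb => hA.1 a b ha hb, ?_, by simp [hA.2.1], hA.2.2⟩
    intro g
    have ht := (Set.mem_iInter.mp hχ {g}).2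
    have := Set.mem_iInter₂.mp ht g (Finset.mem_singleton_self g)
    simpa using this
end

section
/- A group G is left-orderable if and only if for every finite subset {x₁,...,xₙ} of G not containing the identity, there exist signs ε_i ∈ {±1} such that the identity is not in the sub-semigroup generated by x₁^{ε₁},...,xₙ^{εₙ}. -/
/-- From a globally coherent sign function one can build a left order. -/
lemma order_of_signs {G : Type*} [Group G] (σ : G → ℤ)
    (Hpm : ∀ g : G, σ g = 1 ∨ σ g = -1)
    (Hσ : ∀ F : Finset G, (1 : G) ∉ F →
      (1 : G) ∉ Subsemigroup.closure {y : G | ∃ x ∈ F, y = x ^ σ x}) :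
    IsLeftOrderable G := by
  classical
  have fact1 : ∀ g : G, g ≠ 1 → ¬(σ g = 1 ∧ σ g⁻¹ = 1) := by
    rintro g hg ⟨h1, h2⟩
    have hm : (1 : G) ∉ ({g, g⁻¹} : Finset G) := by
      simp only [Finset.mem_insert, Finset.mem_singleton]
      push_neg
      exact ⟨fun h => hg h.symm, fun h => hg (inv_eq_one.mp h.symm)⟩
    apply Hσ {g, g⁻¹} hm
    have hgmem : g ∈ Subsemigroup.closure {y : G | ∃ x ∈ ({g, g⁻¹} : Finset G), y = x ^ σ x} :=
      Subsemigroup.subset_closure ⟨g, by simp, by rw [h1, zpow_one]⟩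
    have hginv : g⁻¹ ∈ Subsemigroup.closure {y : G | ∃ x ∈ ({g, g⁻¹} : Finset G), y = x ^ σ x} :=
      Subsemigroup.subset_closure ⟨g⁻¹, by simp, by rw [h2, zpow_one]⟩
    simpa using Subsemigroup.mul_mem _ hgmem hginv
  have fact2 : ∀ g : G, g ≠ 1 → σ g ≠ 1 → σ g⁻¹ = 1 := by
    intro g hg hσg
    have h1 : σ g = -1 := (Hpm g).resolve_left hσg
    rcases Hpm g⁻¹ with h2 | h2
    · exact h2
    · exfalso
      have hm : (1 : G) ∉ ({g, g⁻¹} : Finset G) := by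
        simp only [Finset.mem_insert, Finset.mem_singleton]
        push_neg
        exact ⟨fun h => hg h.symm, fun h => hg (inv_eq_one.mp h.symm)⟩
      apply Hσ {g, g⁻¹} hm
      have hgmem : g⁻¹ ∈ Subsemigroup.closure {y : G | ∃ x ∈ ({g, g⁻¹} : Finset G), y = x ^ σ x} :=
        Subsemigroup.subset_closure ⟨g, by simp, by rw [h1, zpow_neg_one]⟩
      have hginv : g ∈ Subsemigroup.closure {y : G | ∃ x ∈ ({g, g⁻¹} : Finset G), y = x ^ σ x} :=
        Subsemigroup.subset_closure ⟨g⁻¹, by simp, by rw [h2, zpow_neg_one, inv_inv]⟩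
      simpa using Subsemigroup.mul_mem _ hginv hgmem
  have fact3 : ∀ a b : G, a ≠ 1 → σ a = 1 → b ≠ 1 → σ b = 1 → a * b ≠ 1 ∧ σ (a * b) = 1 := by
    intro a b ha hσa hb hσb
    have hab : a * b ≠ 1 := by
      intro h
      have : b = a⁻¹ := eq_inv_of_mul_eq_one_right h
      exact fact1 a ha ⟨hσa, this ▸ hσb⟩
    refine ⟨hab, ?_⟩
    by_contra hσab
    have h3 : σ (a * b)⁻¹ = 1 := fact2 _ hab hσab
    have hm : (1 : G) ∉ ({a, b, (a * b)⁻¹} : Finset G) := by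
      simp only [Finset.mem_insert, Finset.mem_singleton]
      push_neg
      refine ⟨fun h => ha h.symm, fun h => hb h.symm, fun h => hab (inv_eq_one.mp h.symm)⟩
    apply Hσ {a, b, (a * b)⁻¹} hm
    set X := {y : G | ∃ x ∈ ({a, b, (a * b)⁻¹} : Finset G), y = x ^ σ x}
    have hma : a ∈ Subsemigroup.closure X :=
      Subsemigroup.subset_closure ⟨a, by simp, by rw [hσa, zpow_one]⟩
    have hmb : b ∈ Subsemigroup.closure X :=
      Subsemigroup.subset_closure ⟨b, by simp, by rw [hσb, zpow_one]⟩
    have hmc : (a * b)⁻¹ ∈ Subsemigroup.closure X :=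
      Subsemigroup.subset_closure ⟨(a * b)⁻¹, by simp, by rw [h3, zpow_one]⟩
    have := Subsemigroup.mul_mem _ (Subsemigroup.mul_mem _ hma hmb) hmc
    rw [show (1 : G) = a * b * (a * b)⁻¹ by group]
    exact this
  refine ⟨fun g h => g⁻¹ * h ≠ 1 ∧ σ (g⁻¹ * h) = 1, ?_, ?_⟩
  · refine { trichotomous := ?_, irrefl := ?_, trans := ?_ }
    · intro g h hn1 hn2
      by_cases hgh : g = h
      · exact hgh
      · have hne : g⁻¹ * h ≠ 1 := by
          intro h1
          exact hgh (by rw [← inv_inv g, ← mul_one g⁻¹⁻¹]; rw [← h1]; group)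
        by_cases hσ1 : σ (g⁻¹ * h) = 1
        · exact (hn1 ⟨hne, hσ1⟩).elim
        · have h2 := fact2 _ hne hσ1
          have heq : (g⁻¹ * h)⁻¹ = h⁻¹ * g := by group
          refine (hn2 ⟨?_, ?_⟩).elim
          · rw [← heq]; exact inv_ne_one.mpr hne
          · rw [← heq]; exact h2
    · intro g hg
      exact hg.1 (by group)
    · rintro g h k ⟨h1, h2⟩ ⟨h3, h4⟩
      have heq : g⁻¹ * k = (g⁻¹ * h) * (h⁻¹ * k) := by group
      have := fact3 _ _ h1 h2 h3 h4
      rw [heq]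
      exact this
  · rintro f g h ⟨h1, h2⟩
    have heq : (f * g)⁻¹ * (f * h) = g⁻¹ * h := by group
    rw [heq]
    exact ⟨h1, h2⟩

theorem leftOrderable_iff_signs {G : Type*} [Group G] :
    IsLeftOrderable G ↔
      ∀ F : Finset G, (1 : G) ∉ F →
        ∃ ε : G → ℤ, (∀ x ∈ F, ε x = 1 ∨ ε x = -1) ∧
          (1 : G) ∉ Subsemigroup.closure {y : G | ∃ x ∈ F, y = x ^ ε x} := by
  constructor
  · rintro ⟨r, hsto, hli⟩ F hF
    classical
    haveI := hsto
    set ε : G → ℤ := fun x => if r 1 x then 1 else -1 with hε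
    refine ⟨ε, fun x _ => by by_cases h : r 1 x <;> simp [hε, h], ?_⟩
    set P : Subsemigroup G :=
      { carrier := {g : G | r 1 g}
        mul_mem' := by
          rintro a b (ha : r 1 a) (hb : r 1 b)
          have : r a (a * b) := by simpa using hli a 1 b hb
          exact hsto.trans _ _ _ ha this } with hP
    have hsub : {y : G | ∃ x ∈ F, y = x ^ ε x} ⊆ (P : Set G) := by
      rintro y ⟨x, hxF, rfl⟩
      have hx1 : x ≠ 1 := fun h => hF (h ▸ hxF)
      by_cases h : r 1 x
      · have : ε x = 1 := by simp [hε, h]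
        rw [this, zpow_one]
        exact h
      · have : ε x = -1 := by simp [hε, h]
        rw [this, zpow_neg_one]
        rcases (show r 1 x ∨ 1 = x ∨ r x 1 by
          by_cases h1 : r 1 x
          · exact Or.inl h1
          by_cases h2 : r x 1
          · exact Or.inr (Or.inr h2)
          exact Or.inr (Or.inl (hsto.trichotomous 1 x h1 h2))) with h' | h' | h'
        · exact absurd h' h
        · exact absurd h'.symm hx1
        · show r 1 x⁻¹
          simpa using hli x⁻¹ x 1 h'
    intro hmem
    have : (1 : G) ∈ P := Subsemigroup.closure_le.mpr hsub hmem
    exact hsto.irrefl 1 this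
  · intro h
    classical
    set ι := {F : Finset G // (1 : G) ∉ F} with hι
    haveI : Nonempty ι := ⟨⟨∅, by simp⟩⟩
    choose εf hεf1 hεf2 using fun F : ι => h F.1 F.2
    -- build an ultrafilter refining the "eventually contains F" filter
    set f : Filter ι := ⨅ F : ι, Filter.principal {F' : ι | F.1 ⊆ F'.1} with hf
    have hdir : Directed (· ≥ ·) fun F : ι => Filter.principal {F' : ι | F.1 ⊆ F'.1} := by
      intro F₁ F₂
      refine ⟨⟨F₁.1 ∪ F₂.1, by simp [F₁.2, F₂.2]⟩, ?_, ?_⟩ <;>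
        · apply Filter.principal_mono.mpr
          intro F' hF'
          simp only [Set.mem_setOf_eq] at hF' ⊢
          intro x hx
          apply hF'
          simp [hx]
    haveI hne : f.NeBot := by
      rw [hf]
      apply Filter.iInf_neBot_of_directed hdir
      intro F
      exact Filter.principal_neBot_iff.mpr ⟨F, by simp⟩
    set 𝒰 : Ultrafilter ι := Ultrafilter.of f with h𝒰
    have hUle : (𝒰 : Filter ι) ≤ f := Ultrafilter.of_le f
    have hUF : ∀ F : ι, {F' : ι | F.1 ⊆ F'.1} ∈ 𝒰 := fun F =>
      hUle (Filter.mem_iInf_of_mem F (Filter.mem_principal_self _))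
    set σ : G → ℤ := fun g => if {F' : ι | εf F' g = 1} ∈ 𝒰 then 1 else -1 with hσdef
    have Hpm : ∀ g : G, σ g = 1 ∨ σ g = -1 := by
      intro g
      by_cases hc : {F' : ι | εf F' g = 1} ∈ 𝒰 <;> simp [hσdef, hc]
    have Hσ : ∀ F : Finset G, (1 : G) ∉ F →
        (1 : G) ∉ Subsemigroup.closure {y : G | ∃ x ∈ F, y = x ^ σ x} := by
      intro F hF
      set Fι : ι := ⟨F, hF⟩ with hFι
      have hS : ({F' : ι | F ⊆ F'.1} ∩ ⋂ g ∈ F, {F' : ι | εf F' g = σ g}) ∈ 𝒰 := by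
        refine Filter.inter_mem (hUF Fι) ?_
        rw [Filter.biInter_finset_mem]
        intro g hg
        by_cases hc : {F' : ι | εf F' g = 1} ∈ 𝒰
        · have hσg : σ g = 1 := by simp [hσdef, hc]
          apply Filter.mem_of_superset hc
          intro F' hF'
          simp only [Set.mem_setOf_eq] at hF' ⊢
          rw [hσg, hF']
        · have hσg : σ g = -1 := by simp [hσdef, hc]
          have hcompl : {F' : ι | εf F' g = 1}ᶜ ∈ 𝒰 := Ultrafilter.compl_mem_iff_notMem.mpr hc
          apply Filter.mem_of_superset (Filter.inter_mem (hUF Fι) hcompl)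
          rintro F' ⟨hF1, hF2⟩
          simp only [Set.mem_setOf_eq, Set.mem_compl_iff] at hF1 hF2 ⊢
          rw [hσg]
          exact (hεf1 F' g (hF1 hg)).resolve_left hF2
      obtain ⟨F', hF'⟩ := Ultrafilter.nonempty_of_mem hS
      obtain ⟨hF'1, hF'2⟩ := hF'
      simp only [Set.mem_iInter, Set.mem_setOf_eq] at hF'1 hF'2
      intro hmem
      apply hεf2 F'
      have hsub : {y : G | ∃ x ∈ F, y = x ^ σ x} ⊆ {y : G | ∃ x ∈ F'.1, y = x ^ εf F' x} := by
        rintro y ⟨x, hx, rfl⟩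
        exact ⟨x, hF'1 hx, by rw [hF'2 x hx]⟩
      exact Subsemigroup.closure_mono hsub hmem
    exact order_of_signs σ (fun g => Hpm g) Hσ
end

section
/- (Burns–Hale) A group G is left-orderable if and only if every nontrivial finitely generated subgroup H of G admits a nontrivial homomorphism to some left-orderable group. In particular, every locally indicable group is left-orderable. -/
/-- A positive cone yields a left-invariant strict total order. -/
private lemma bh_order_of_cone {G : Type*} [Group G] {P : Set G} (hP : IsPositiveCone P) :
    IsLeftOrderable G := by
  obtain ⟨hmul, htri, hone, hasym⟩ := hP
  refine ⟨fun a b => a⁻¹ * b ∈ P, ?_, ?_⟩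
  · refine { trichotomous := ?_, irrefl := ?_, trans := ?_ }
    · intro a b; refine (fun (H : _ ∨ _ ∨ _) h₁ h₂ => H.elim (absurd · h₁) (·.elim id (absurd · h₂))) ?_
      rcases htri (a⁻¹ * b) with h | h | h
      · exact Or.inr (Or.inl (inv_mul_eq_one.1 h))
      · exact Or.inl h
      · refine Or.inr (Or.inr ?_)
        simpa [mul_inv_rev] using h
    · intro a h
      rw [inv_mul_cancel] at h
      exact hone h
    · intro a b c hab hbc
      have := hmul _ hab _ hbc
      simpa [mul_assoc] using this
  · intro f g h hr
    simpa [mul_assoc] using hr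

private lemma bh_key {G : Type u} [Group G]
    (hyp : ∀ H : Subgroup G, H.FG → H ≠ ⊥ →
        ∃ (L : Type u) (_ : Group L), IsLeftOrderable L ∧ ∃ f : H →* L, f ≠ 1) :
    ∀ S : Finset G, (1 : G) ∉ S →
      ∃ σ : G → Bool,
        (1 : G) ∉ Subsemigroup.closure ((fun g => if σ g then g else g⁻¹) '' ↑S) := by
  intro S
  induction S using Finset.strongInductionOn with
  | _ S IH =>
  intro hS1
  classical
  rcases S.eq_empty_or_nonempty with rfl | ⟨g0, hg0⟩
  · refine ⟨fun _ => true, ?_⟩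
    simp only [Finset.coe_empty, Set.image_empty, Subsemigroup.closure_empty]
    exact fun a => a
  set H := Subgroup.closure (↑S : Set G) with hH
  have hHfg : H.FG := (Subgroup.fg_iff H).2 ⟨↑S, rfl, S.finite_toSet⟩
  have hg0H : g0 ∈ H := Subgroup.subset_closure hg0
  have hg0ne : g0 ≠ 1 := fun h => hS1 (h ▸ hg0)
  have hHbot : H ≠ ⊥ :=
    Subgroup.ne_bot_iff_exists_ne_one.2
      ⟨⟨g0, hg0H⟩, fun h => hg0ne (congrArg Subtype.val h)⟩
  obtain ⟨L, _, ⟨r, hsto, hinv⟩, f, hf⟩ := hyp H hHfg hHbot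
  haveI := hsto
  have hgen : ∃ g ∈ S, ∃ hg : g ∈ H, f ⟨g, hg⟩ ≠ 1 := by
    by_contra hcon
    push_neg at hcon
    apply hf
    ext x
    rcases x with ⟨x, hx⟩
    simp only [MonoidHom.one_apply]
    refine Subgroup.closure_induction (p := fun x hx => f ⟨x, hx⟩ = 1) ?_ ?_ ?_ ?_ hx
    · intro y hy; exact hcon y hy _
    · exact map_one f
    · intro x y hx hy px py
      show f (⟨x, hx⟩ * ⟨y, hy⟩) = 1
      rw [map_mul, px, py, one_mul]
    · intro x hx px
      show f (⟨x, hx⟩⁻¹) = 1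
      rw [map_inv, px, inv_one]
  obtain ⟨g1, hg1S, hg1H, hg1f⟩ := hgen
  set S₁ := S.filter (fun g => ∀ hg : g ∈ H, f ⟨g, hg⟩ = 1) with hS₁
  have hsub : S₁ ⊂ S :=
    Finset.filter_ssubset.2 ⟨g1, hg1S, fun hall => hg1f (hall hg1H)⟩
  have hS₁1 : (1 : G) ∉ S₁ := fun h => hS1 (Finset.mem_of_mem_filter _ h)
  obtain ⟨σ₁, hσ₁⟩ := IH S₁ hsub hS₁1
  set C₁ := Subsemigroup.closure ((fun g => if σ₁ g then g else g⁻¹) '' ↑S₁) with hC₁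
  set σ : G → Bool := fun g =>
    if hg : g ∈ H then
      (if f ⟨g, hg⟩ = 1 then σ₁ g else (if r 1 (f ⟨g, hg⟩) then true else false))
    else σ₁ g with hσdef
  have hσ_ker : ∀ g (hg : g ∈ H), f ⟨g, hg⟩ = 1 → σ g = σ₁ g := by
    intro g hg h1
    show (if hg' : g ∈ H then _ else _) = σ₁ g
    rw [dif_pos hg, if_pos h1]
  have hσ_pos : ∀ g (hg : g ∈ H), f ⟨g, hg⟩ ≠ 1 → r 1 (f ⟨g, hg⟩) → σ g = true := by
    intro g hg h1 hr
    show (if hg' : g ∈ H then _ else _) = true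
    rw [dif_pos hg, if_neg h1, if_pos hr]
  have hσ_neg : ∀ g (hg : g ∈ H), f ⟨g, hg⟩ ≠ 1 → ¬ r 1 (f ⟨g, hg⟩) → σ g = false := by
    intro g hg h1 hr
    show (if hg' : g ∈ H then _ else _) = false
    rw [dif_pos hg, if_neg h1, if_neg hr]
  refine ⟨σ, fun hmem => ?_⟩
  have main : ∀ x ∈ Subsemigroup.closure ((fun g => if σ g then g else g⁻¹) '' ↑S),
      ∃ y : H, ↑y = x ∧ (r 1 (f y) ∨ (f y = 1 ∧ x ∈ C₁)) := by
    intro x hx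
    refine Subsemigroup.closure_induction
      (p := fun x _ => ∃ y : H, ↑y = x ∧ (r 1 (f y) ∨ (f y = 1 ∧ x ∈ C₁))) ?_ ?_ hx
    · rintro x ⟨g, hgS, rfl⟩
      have hgS' : g ∈ S := hgS
      have hgH : g ∈ H := Subgroup.subset_closure hgS
      simp only
      by_cases hf1 : f ⟨g, hgH⟩ = 1
      · have hgS₁ : g ∈ S₁ := Finset.mem_filter.2 ⟨hgS', fun _ => hf1⟩
        have hσg : σ g = σ₁ g := hσ_ker g hgH hf1
        have hmem₁ : (if σ₁ g then g else g⁻¹) ∈ C₁ :=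
          Subsemigroup.subset_closure ⟨g, Finset.mem_coe.2 hgS₁, rfl⟩
        have hXeq : (if σ g then g else g⁻¹) = (if σ₁ g then g else g⁻¹) := by rw [hσg]
        cases hb : σ₁ g with
        | true =>
          have hX : (if σ g then g else g⁻¹) = g := by rw [hσg, hb]; simp
          refine ⟨⟨g, hgH⟩, hX.symm, Or.inr ⟨hf1, ?_⟩⟩
          rw [hXeq] at *
          exact hmem₁
        | false =>
          have hX : (if σ g then g else g⁻¹) = g⁻¹ := by rw [hσg, hb]; simp
          refine ⟨⟨g, hgH⟩⁻¹, ?_, Or.inr ⟨?_, ?_⟩⟩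
          · rw [hX]; rfl
          · rw [map_inv, hf1, inv_one]
          · rw [hXeq]; exact hmem₁
      · by_cases hr : r 1 (f ⟨g, hgH⟩)
        · have hX : (if σ g then g else g⁻¹) = g := by rw [hσ_pos g hgH hf1 hr]; simp
          exact ⟨⟨g, hgH⟩, hX.symm, Or.inl hr⟩
        · have hX : (if σ g then g else g⁻¹) = g⁻¹ := by rw [hσ_neg g hgH hf1 hr]; simp
          refine ⟨⟨g, hgH⟩⁻¹, by rw [hX]; rfl, Or.inl ?_⟩
          rcases trichotomous_of r (f ⟨g, hgH⟩) 1 with h | h | h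
          · have h2 := hinv (f ⟨g, hgH⟩)⁻¹ _ _ h
            rw [inv_mul_cancel, mul_one] at h2
            rwa [map_inv]
          · exact absurd h hf1
          · exact absurd h hr
    · rintro x y hx hy ⟨yx, hyx, px⟩ ⟨yy, hyy, py⟩
      refine ⟨yx * yy, by rw [Subgroup.coe_mul, hyx, hyy], ?_⟩
      rw [map_mul]
      rcases px with hpx | ⟨hx1, hcx⟩
      · rcases py with hpy | ⟨hy1, hcy⟩
        · have h2 := hinv (f yx) _ _ hpy
          rw [mul_one] at h2
          exact Or.inl (trans_of r hpx h2)
        · rw [hy1, mul_one]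
          exact Or.inl hpx
      · rcases py with hpy | ⟨hy1, hcy⟩
        · rw [hx1, one_mul]
          exact Or.inl hpy
        · exact Or.inr ⟨by rw [hx1, hy1, one_mul], Subsemigroup.mul_mem _ hcx hcy⟩
  obtain ⟨y, hy1, hQ⟩ := main 1 hmem
  have hy : y = 1 := Subtype.ext hy1
  rw [hy, map_one] at hQ
  rcases hQ with hQ | ⟨_, hQ⟩
  · exact irrefl_of r 1 hQ
  · exact hσ₁ hQ

private lemma bh_cone {G : Type*} [Group G]
    (h : ∀ S : Finset G, (1 : G) ∉ S →
      ∃ σ : G → Bool,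
        (1 : G) ∉ Subsemigroup.closure ((fun g => if σ g then g else g⁻¹) '' ↑S)) :
    IsLeftOrderable G := by
  classical
  have hch : ∀ F : Finset G, ∃ σ : G → Bool,
      (1 : G) ∉ Subsemigroup.closure ((fun g => if σ g then g else g⁻¹) '' ↑(F.erase 1)) :=
    fun F => h (F.erase 1) (Finset.notMem_erase 1 F)
  choose σ hσ using hch
  haveI : Nonempty G := ⟨1⟩
  haveI : (Filter.atTop : Filter (Finset G)).NeBot := Filter.atTop_neBot
  set U := Ultrafilter.of (Filter.atTop : Filter (Finset G)) with hU
  have hmemA : ∀ g : G, {F : Finset G | g ∈ F} ∈ U := by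
    intro g
    have h1 : {F : Finset G | {g} ≤ F} ∈ (Filter.atTop : Filter (Finset G)) :=
      Filter.mem_atTop _
    refine Filter.mem_of_superset (Ultrafilter.of_le (Filter.atTop : Filter (Finset G)) h1) ?_
    intro F hF
    exact Finset.singleton_subset_iff.1 hF
  have hpos : ∀ (F : Finset G) (g : G), g ∈ F → g ≠ 1 →
      (if σ F g then g else g⁻¹) ∈
        Subsemigroup.closure ((fun g => if σ F g then g else g⁻¹) '' ↑(F.erase 1)) := by
    intro F g hg hg1
    exact Subsemigroup.subset_closure ⟨g, Finset.mem_coe.2 (Finset.mem_erase.2 ⟨hg1, hg⟩), rfl⟩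
  have hkey2 : ∀ (F : Finset G) (a b : G), a ∈ F → a ≠ 1 → b ∈ F → b ≠ 1 →
      (if σ F a then a else a⁻¹) * (if σ F b then b else b⁻¹) = 1 → False := by
    intro F a b ha ha1 hb hb1 hab
    have h2 := Subsemigroup.mul_mem _ (hpos F a ha ha1) (hpos F b hb hb1)
    rw [hab] at h2
    exact hσ F h2
  have hkey3 : ∀ (F : Finset G) (a b c : G), a ∈ F → a ≠ 1 → b ∈ F → b ≠ 1 → c ∈ F → c ≠ 1 →
      (if σ F a then a else a⁻¹) * (if σ F b then b else b⁻¹) * (if σ F c then c else c⁻¹) = 1 →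
      False := by
    intro F a b c ha ha1 hb hb1 hc hc1 habc
    have h2 := Subsemigroup.mul_mem _
      (Subsemigroup.mul_mem _ (hpos F a ha ha1) (hpos F b hb hb1)) (hpos F c hc hc1)
    rw [habc] at h2
    exact hσ F h2
  refine bh_order_of_cone (P := {g : G | g ≠ 1 ∧ {F : Finset G | σ F g = true} ∈ U}) ⟨?_, ?_, ?_, ?_⟩
  · rintro a ⟨ha1, haU⟩ b ⟨hb1, hbU⟩
    have hab1 : a * b ≠ 1 := by
      intro habe
      have hW : ({F : Finset G | σ F a = true} ∩ {F : Finset G | σ F b = true} ∩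
          {F : Finset G | a ∈ F} ∩ {F : Finset G | b ∈ F}) ∈ U :=
        Filter.inter_mem (Filter.inter_mem (Filter.inter_mem haU hbU) (hmemA a)) (hmemA b)
      obtain ⟨F, ⟨⟨⟨hFa, hFb⟩, hFa'⟩, hFb'⟩⟩ := Ultrafilter.nonempty_of_mem hW
      have ha' : σ F a = true := hFa
      have hb' : σ F b = true := hFb
      refine hkey2 F a b hFa' ha1 hFb' hb1 ?_
      rw [if_pos ha', if_pos hb']
      exact habe
    refine ⟨hab1, ?_⟩
    have hW : ({F : Finset G | σ F a = true} ∩ {F : Finset G | σ F b = true} ∩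
        {F : Finset G | a ∈ F} ∩ {F : Finset G | b ∈ F} ∩ {F : Finset G | a * b ∈ F}) ∈ U :=
      Filter.inter_mem (Filter.inter_mem (Filter.inter_mem
        (Filter.inter_mem haU hbU) (hmemA a)) (hmemA b)) (hmemA (a * b))
    refine Filter.mem_of_superset hW ?_
    rintro F ⟨⟨⟨⟨hFa, hFb⟩, hFa'⟩, hFb'⟩, hFab'⟩
    have ha' : σ F a = true := hFa
    have hb' : σ F b = true := hFb
    show σ F (a * b) = true
    cases hb2 : σ F (a * b) with
    | true => rfl
    | false =>
      exfalso
      refine hkey3 F a b (a * b) hFa' ha1 hFb' hb1 hFab' hab1 ?_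
      rw [if_pos ha', if_pos hb', if_neg (by simp [hb2])]
      exact mul_inv_cancel (a * b)
  · intro g
    by_cases hg1 : g = 1
    · exact Or.inl hg1
    rcases Ultrafilter.mem_or_compl_mem U {F : Finset G | σ F g = true} with hin | hout
    · exact Or.inr (Or.inl ⟨hg1, hin⟩)
    · refine Or.inr (Or.inr ⟨inv_ne_one.2 hg1, ?_⟩)
      have hW : ({F : Finset G | σ F g = true}ᶜ ∩ {F : Finset G | g ∈ F} ∩
          {F : Finset G | g⁻¹ ∈ F}) ∈ U :=
        Filter.inter_mem (Filter.inter_mem hout (hmemA g)) (hmemA g⁻¹)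
      refine Filter.mem_of_superset hW ?_
      rintro F ⟨⟨hFc, hFg⟩, hFgi⟩
      show σ F g⁻¹ = true
      have hFg' : ¬ σ F g = true := hFc
      cases hb2 : σ F g⁻¹ with
      | true => rfl
      | false =>
        exfalso
        refine hkey2 F g g⁻¹ hFg hg1 hFgi (inv_ne_one.2 hg1) ?_
        rw [if_neg hFg', if_neg (by simp [hb2]), inv_inv]
        exact inv_mul_cancel g
  · rintro ⟨h1, _⟩
    exact h1 rfl
  · rintro g ⟨⟨hg1, hU1⟩, ⟨_, hU2⟩⟩
    have hW : ({F : Finset G | σ F g = true} ∩ {F : Finset G | σ F g⁻¹ = true} ∩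
        {F : Finset G | g ∈ F} ∩ {F : Finset G | g⁻¹ ∈ F}) ∈ U :=
      Filter.inter_mem (Filter.inter_mem (Filter.inter_mem hU1 hU2) (hmemA g)) (hmemA g⁻¹)
    obtain ⟨F, ⟨⟨⟨hFa, hFb⟩, hFa'⟩, hFb'⟩⟩ := Ultrafilter.nonempty_of_mem hW
    have ha' : σ F g = true := hFa
    have hb' : σ F g⁻¹ = true := hFb
    refine hkey2 F g g⁻¹ hFa' hg1 hFb' (inv_ne_one.2 hg1) ?_
    rw [if_pos ha', if_pos hb']
    exact mul_inv_cancel g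

theorem burns_hale {G : Type u} [Group G] :
    (IsLeftOrderable G ↔
      ∀ H : Subgroup G, H.FG → H ≠ ⊥ →
        ∃ (L : Type u) (_ : Group L), IsLeftOrderable L ∧ ∃ f : H →* L, f ≠ 1) ∧
    ((∀ H : Subgroup G, H.FG → H ≠ ⊥ →
        ∃ f : H →* Multiplicative ℤ, Function.Surjective f) → IsLeftOrderable G) := by
  have bwd : (∀ H : Subgroup G, H.FG → H ≠ ⊥ →
      ∃ (L : Type u) (_ : Group L), IsLeftOrderable L ∧ ∃ f : H →* L, f ≠ 1) →
      IsLeftOrderable G := fun hyp => bh_cone (bh_key hyp)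
  have fwd : IsLeftOrderable G → ∀ H : Subgroup G, H.FG → H ≠ ⊥ →
      ∃ (L : Type u) (_ : Group L), IsLeftOrderable L ∧ ∃ f : H →* L, f ≠ 1 := by
    rintro ⟨r, hsto, hinv⟩ H _ hbot
    haveI := hsto
    refine ⟨↥H, inferInstance, ⟨fun a b => r ↑a ↑b, ?_, ?_⟩, MonoidHom.id ↥H, ?_⟩
    · refine { trichotomous := ?_, irrefl := ?_, trans := ?_ }
      · intro a b; refine (fun (H : _ ∨ _ ∨ _) h₁ h₂ => H.elim (absurd · h₁) (·.elim id (absurd · h₂))) ?_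
        rcases trichotomous_of r (a : G) (b : G) with h | h | h
        · exact Or.inl h
        · exact Or.inr (Or.inl (Subtype.ext h))
        · exact Or.inr (Or.inr h)
      · intro a
        exact irrefl_of r (a : G)
      · intro a b c hab hbc
        exact trans_of r hab hbc
    · intro a b c hr
      exact hinv ↑a ↑b ↑c hr
    · obtain ⟨a, ha⟩ := Subgroup.ne_bot_iff_exists_ne_one.1 hbot
      intro hcon
      apply ha
      have := DFunLike.congr_fun hcon a
      simpa using this
  refine ⟨⟨fwd, bwd⟩, fun hli => bwd ?_⟩
  intro H hfg hbot
  obtain ⟨f, hs⟩ := hli H hfg hbot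
  refine ⟨ULift.{u} (Multiplicative ℤ), inferInstance,
    ⟨fun a b => a.down < b.down, ?_, ?_⟩,
    (MulEquiv.ulift.symm : Multiplicative ℤ ≃* ULift.{u} (Multiplicative ℤ)).toMonoidHom.comp f,
    ?_⟩
  · refine { trichotomous := ?_, irrefl := ?_, trans := ?_ }
    · intro a b; refine (fun (H : _ ∨ _ ∨ _) h₁ h₂ => H.elim (absurd · h₁) (·.elim id (absurd · h₂))) ?_
      rcases lt_trichotomy a.down b.down with h | h | h
      · exact Or.inl h
      · exact Or.inr (Or.inl (by cases a; cases b; simpa using h))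
      · exact Or.inr (Or.inr h)
    · intro a
      exact lt_irrefl a.down
    · intro a b c hab hbc
      exact lt_trans hab hbc
  · intro a b c hr
    exact mul_lt_mul_right hr a.down
  · intro hcon
    obtain ⟨x, hx⟩ := hs (Multiplicative.ofAdd 1)
    have h1 := DFunLike.congr_fun hcon x
    simp only [MonoidHom.comp_apply, MonoidHom.one_apply, hx] at h1
    have h2 := congrArg ULift.down h1
    have h3 : Multiplicative.ofAdd (1 : ℤ) = 1 := by
      simp only [MulEquiv.ulift, Equiv.ulift] at h2
      exact h2
    simp [← ofAdd_zero] at h3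
end
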